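/- Let K be a compact subset of ℝ of infinite cardinality, n ≥ 2, and let δ_n(K) = sup over all x_1,…,x_n ∈ K of ∏_{1 ≤ i ≠ j ≤ n} |x_i − x_j|^{1/(n(n−1))}. Then for every monic real polynomial P of degree n, δ_{n+1}(K)^{n(n+1)/2} ≤ (n+1) · δ_n(K)^{n(n−1)/2} · ‖P‖_K. -/

import Mathlib

open Polynomial

/-- The sup norm of a real polynomial on a set `K ⊆ ℝ`. -/
noncomputable def supNormOn (K : Set ℝ) (P : Polynomial ℝ) : ℝ :=
  sSup ((fun x => |P.eval x|) '' K)

/-- The `n`-th diameter `δ_n(K)` of a set `K ⊆ ℝ`. -/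
noncomputable def deltaN (K : Set ℝ) (n : ℕ) : ℝ :=
  sSup {r : ℝ | ∃ x : Fin n → ℝ, (∀ i, x i ∈ K) ∧
    r = (∏ p ∈ Finset.univ.offDiag, |x p.1 - x p.2|) ^ (((n : ℝ) * ((n : ℝ) - 1))⁻¹)}

lemma pow_of_rpow (W e : ℝ) (hW : 0 ≤ W) (m : ℕ) (he : e * m = 1/2) : ((W^2) ^ e) ^ m = W := by
  rw [← Real.rpow_natCast ((W^2) ^ e) m, ← Real.rpow_mul (sq_nonneg W), he,
    show (W^2 : ℝ) = W^(2:ℝ) by rw [← Real.rpow_natCast W 2]; norm_num,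
    ← Real.rpow_mul hW]
  norm_num

lemma prodOffDiag_eq_sq {m : ℕ} (f : Fin m → ℝ) :
    ∏ p ∈ Finset.univ.offDiag, |f p.1 - f p.2| = (∏ i, ∏ j ∈ Finset.Ioi i, |f j - f i|)^2 := by
  classical
  have h1 : (Finset.univ.offDiag : Finset (Fin m × Fin m)) =
      (Finset.univ ×ˢ Finset.univ).filter (fun p => p.1 ≠ p.2) := by
    ext p; simp [Finset.mem_offDiag]
  have h2 : ((Finset.univ ×ˢ Finset.univ : Finset (Fin m × Fin m)).filter (fun p => p.1 ≠ p.2)) =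
      ((Finset.univ ×ˢ Finset.univ).filter (fun p => p.1 < p.2)) ∪
      ((Finset.univ ×ˢ Finset.univ).filter (fun p => p.2 < p.1)) := by
    rw [← Finset.filter_or]; apply Finset.filter_congr; intro p _
    exact ⟨fun h => lt_or_gt_of_ne h, fun h => h.elim ne_of_lt ne_of_gt⟩
  have hdisj : Disjoint
      ((Finset.univ ×ˢ Finset.univ : Finset (Fin m × Fin m)).filter (fun p => p.1 < p.2))
      ((Finset.univ ×ˢ Finset.univ).filter (fun p => p.2 < p.1)) := by
    rw [Finset.disjoint_left]
    intro p hp hq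
    simp only [Finset.mem_filter] at hp hq
    exact absurd hq.2 (lt_asymm hp.2)
  have key : ∏ p ∈ (Finset.univ ×ˢ Finset.univ : Finset (Fin m × Fin m)).filter
        (fun p => p.1 < p.2), |f p.1 - f p.2| = ∏ i, ∏ j ∈ Finset.Ioi i, |f j - f i| := by
    rw [Finset.prod_filter, Finset.prod_product]
    refine Finset.prod_congr rfl fun i _ => ?_
    rw [← Finset.filter_lt_eq_Ioi, Finset.prod_filter]
    refine Finset.prod_congr rfl fun j _ => ?_
    rcases lt_or_ge i j with h | h
    · simp [h, abs_sub_comm]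
    · simp [not_lt_of_ge h]
  have key2 : ∏ p ∈ (Finset.univ ×ˢ Finset.univ : Finset (Fin m × Fin m)).filter
        (fun p => p.2 < p.1), |f p.1 - f p.2| = ∏ i, ∏ j ∈ Finset.Ioi i, |f j - f i| := by
    rw [← key]
    apply Finset.prod_nbij' (fun p => Prod.swap p) (fun p => Prod.swap p) <;>
      simp [abs_sub_comm]
  rw [h1, h2, Finset.prod_union hdisj, key, key2, sq]

lemma abs_det_vandermonde {m : ℕ} (v : Fin m → ℝ) :
    |(Matrix.vandermonde v).det| = ∏ i, ∏ j ∈ Finset.Ioi i, |v j - v i| := by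
  rw [Matrix.det_vandermonde, Finset.abs_prod]
  exact Finset.prod_congr rfl fun i _ => Finset.abs_prod _ _

lemma vandermonde_expand {n : ℕ} (P : Polynomial ℝ) (hP : P.Monic) (hPdeg : P.natDegree = n)
    (v : Fin (n+1) → ℝ) :
    (Matrix.vandermonde v).det = ∑ i : Fin (n+1),
      (-1) ^ ((i : ℕ) + n) * P.eval (v i) *
        (Matrix.vandermonde (v ∘ (Fin.succAbove i))).det := by
  classical
  set p : Fin (n+1) → Polynomial ℝ := fun j => if (j : ℕ) = n then P else X ^ (j : ℕ) with hp
  have h_deg : ∀ j, (p j).natDegree = j := by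
    intro j; simp only [hp]
    split
    · next h => rw [hPdeg, h]
    · exact natDegree_X_pow _
  have h_monic : ∀ j, (p j).Monic := by
    intro j; simp only [hp]; split
    · exact hP
    · exact monic_X_pow _
  rw [Matrix.det_eval_matrixOfPolynomials_eq_det_vandermonde v p h_deg h_monic]
  rw [Matrix.det_succ_column _ (Fin.last n)]
  refine Finset.sum_congr rfl fun i _ => ?_
  have hlast : (p (Fin.last n)).eval (v i) = P.eval (v i) := by simp [hp]
  have hsub : (Matrix.of fun i j => (p j).eval (v i)).submatrix i.succAbove (Fin.last n).succAbove
      = Matrix.vandermonde (v ∘ i.succAbove) := by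
    ext a b
    simp only [Matrix.submatrix_apply, Matrix.of_apply, Fin.succAbove_last, Matrix.vandermonde,
      Matrix.of_apply, Function.comp, hp]
    rw [if_neg (by simpa using b.isLt.ne)]
    simp
  rw [hsub, Matrix.of_apply, hlast, Fin.val_last]

lemma bddAbove_deltaSet (K : Set ℝ) (hK : IsCompact K) (n : ℕ) :
    BddAbove {r : ℝ | ∃ x : Fin n → ℝ, (∀ i, x i ∈ K) ∧
      r = (∏ p ∈ Finset.univ.offDiag, |x p.1 - x p.2|) ^ (((n : ℝ) * ((n : ℝ) - 1))⁻¹)} := by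
  obtain ⟨C, hC⟩ : ∃ C, ∀ x ∈ K, |x| ≤ C := by
    obtain ⟨C, hC⟩ := hK.isBounded.subset_closedBall 0
    exact ⟨C, fun x hx => by simpa [Real.dist_eq] using hC hx⟩
  have he : (0:ℝ) ≤ (((n : ℝ) * ((n : ℝ) - 1))⁻¹) := by
    rcases Nat.eq_zero_or_pos n with h | h
    · simp [h]
    · have h1 : (1:ℝ) ≤ (n:ℝ) := by exact_mod_cast h
      have : (0:ℝ) ≤ (n : ℝ) * ((n : ℝ) - 1) := by nlinarith
      positivity
  refine ⟨((2*C+1) ^ (Finset.univ.offDiag : Finset (Fin n × Fin n)).card)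
    ^ (((n : ℝ) * ((n : ℝ) - 1))⁻¹), ?_⟩
  rintro r ⟨x, hx, rfl⟩
  have hle : (∏ p ∈ Finset.univ.offDiag, |x p.1 - x p.2|) ≤
      (2*C+1) ^ (Finset.univ.offDiag : Finset (Fin n × Fin n)).card := by
    rw [← Finset.prod_const]
    refine Finset.prod_le_prod (fun p _ => abs_nonneg _) (fun p _ => ?_)
    calc |x p.1 - x p.2| ≤ |x p.1| + |x p.2| := abs_sub _ _
      _ ≤ C + C + 1 := by
          have := hC _ (hx p.1); have := hC _ (hx p.2); linarith
      _ = 2*C+1 := by ring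
  exact Real.rpow_le_rpow (Finset.prod_nonneg fun p _ => abs_nonneg _) hle he

/-- For every monic real polynomial `P` of degree `n ≥ 2`,
`δ_{n+1}(K)^(n(n+1)/2) ≤ (n+1) * δ_n(K)^(n(n-1)/2) * ‖P‖_K`. -/
theorem deltaN_succ_pow_le (K : Set ℝ) (hK : IsCompact K) (hKinf : K.Infinite)
    (n : ℕ) (hn : 2 ≤ n) (P : Polynomial ℝ) (hP : P.Monic) (hPdeg : P.natDegree = n) :
    deltaN K (n + 1) ^ (n * (n + 1) / 2) ≤
      (n + 1 : ℝ) * deltaN K n ^ (n * (n - 1) / 2) * supNormOn K P := by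
  classical
  obtain ⟨x0, hx0⟩ := hKinf.nonempty
  -- sup norm facts
  have hPle : ∀ x ∈ K, |P.eval x| ≤ supNormOn K P := by
    intro x hx
    exact le_csSup ((hK.image (P.continuous.abs)).bddAbove) ⟨x, hx, rfl⟩
  have hB0 : 0 ≤ supNormOn K P := le_trans (abs_nonneg _) (hPle x0 hx0)
  have bdd_n := bddAbove_deltaSet K hK n
  have bdd_n1 := bddAbove_deltaSet K hK (n+1)
  -- delta nonnegativity
  have hδmem : ∀ m : ℕ, ∀ x : Fin m → ℝ, (∀ i, x i ∈ K) →
      (∏ p ∈ Finset.univ.offDiag, |x p.1 - x p.2|) ^ (((m : ℝ) * ((m : ℝ) - 1))⁻¹)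
        ≤ deltaN K m := by
    intro m x hx
    exact le_csSup (bddAbove_deltaSet K hK m) ⟨x, hx, rfl⟩
  have hδn0 : 0 ≤ deltaN K n :=
    le_trans (Real.rpow_nonneg (Finset.prod_nonneg fun p _ => abs_nonneg _) _)
      (hδmem n (fun _ => x0) (fun _ => hx0))
  have hδn10 : 0 ≤ deltaN K (n+1) :=
    le_trans (Real.rpow_nonneg (Finset.prod_nonneg fun p _ => abs_nonneg _) _)
      (hδmem (n+1) (fun _ => x0) (fun _ => hx0))
  -- arithmetic of exponents
  have hn1 : 1 ≤ n := by omega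
  have hev2 : n * (n - 1) / 2 * 2 = n * (n - 1) := by
    refine Nat.div_mul_cancel ?_
    have h : n - 1 + 1 = n := by omega
    have := Nat.even_mul_succ_self (n - 1)
    rw [h] at this
    rw [mul_comm]
    exact this.two_dvd
  have hev1 : n * (n + 1) / 2 * 2 = n * (n + 1) :=
    Nat.div_mul_cancel (Nat.even_mul_succ_self n).two_dvd
  have hX2 : ((n : ℝ) * ((n : ℝ) - 1)) = ((n * (n-1) : ℕ) : ℝ) := by
    push_cast [Nat.cast_sub hn1]; ring
  have hX2ne : ((n : ℝ) * ((n : ℝ) - 1)) ≠ 0 := by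
    rw [hX2]
    exact_mod_cast Nat.mul_ne_zero (by omega) (by omega)
  have he2 : (((n : ℝ) * ((n : ℝ) - 1))⁻¹) * ((n * (n - 1) / 2 : ℕ) : ℝ) = 1/2 := by
    have hc : ((n * (n - 1) / 2 : ℕ) : ℝ) * 2 = (n : ℝ) * ((n : ℝ) - 1) := by
      rw [hX2]; exact_mod_cast hev2
    field_simp
    rw [hc, mul_div_assoc, div_self (right_ne_zero_of_mul hX2ne), mul_one]
  have hX1 : (((n+1 : ℕ) : ℝ) * (((n+1 : ℕ) : ℝ) - 1)) = ((n * (n+1) : ℕ) : ℝ) := by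
    push_cast; ring
  have hX1ne : (((n+1 : ℕ) : ℝ) * (((n+1 : ℕ) : ℝ) - 1)) ≠ 0 := by
    rw [hX1]
    exact_mod_cast Nat.mul_ne_zero (by omega) (by omega)
  have he1 : ((((n+1 : ℕ) : ℝ) * (((n+1 : ℕ) : ℝ) - 1))⁻¹) * ((n * (n + 1) / 2 : ℕ) : ℝ)
      = 1/2 := by
    have hc : ((n * (n + 1) / 2 : ℕ) : ℝ) * 2 = (((n+1 : ℕ) : ℝ) * (((n+1 : ℕ) : ℝ) - 1)) := by
      rw [hX1]; exact_mod_cast hev1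
    field_simp
    push_cast at hc
    have hne1 := right_ne_zero_of_mul hX1ne
    push_cast at hne1 ⊢
    rw [hc, mul_div_assoc, div_self hne1, mul_one]
  -- key per-tuple bound
  have key : ∀ v : Fin (n+1) → ℝ, (∀ i, v i ∈ K) →
      (∏ i, ∏ j ∈ Finset.Ioi i, |v j - v i|) ≤
        (n + 1 : ℝ) * deltaN K n ^ (n * (n - 1) / 2) * supNormOn K P := by
    intro v hv
    have hsubd : ∀ i : Fin (n+1),
        |(Matrix.vandermonde (v ∘ i.succAbove)).det| ≤ deltaN K n ^ (n * (n - 1) / 2) := by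
      intro i
      set w : Fin n → ℝ := v ∘ i.succAbove with hw
      set W : ℝ := ∏ a, ∏ b ∈ Finset.Ioi a, |w b - w a| with hWdef
      have hW0 : 0 ≤ W :=
        Finset.prod_nonneg fun a _ => Finset.prod_nonneg fun b _ => abs_nonneg _
      set r : ℝ := (∏ p ∈ Finset.univ.offDiag, |w p.1 - w p.2|)
          ^ (((n : ℝ) * ((n : ℝ) - 1))⁻¹) with hrdef
      have hr0 : 0 ≤ r :=
        Real.rpow_nonneg (Finset.prod_nonneg fun p _ => abs_nonneg _) _
      have hrle : r ≤ deltaN K n := hδmem n w (fun a => hv _)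
      have hrW : r ^ (n * (n - 1) / 2) = W := by
        rw [hrdef, prodOffDiag_eq_sq]
        exact pow_of_rpow W _ hW0 _ he2
      rw [abs_det_vandermonde, ← hWdef, ← hrW]
      exact pow_le_pow_left₀ hr0 hrle _
    calc (∏ i, ∏ j ∈ Finset.Ioi i, |v j - v i|) = |(Matrix.vandermonde v).det| :=
        (abs_det_vandermonde v).symm
      _ = |∑ i : Fin (n+1), (-1) ^ ((i : ℕ) + n) * P.eval (v i) *
            (Matrix.vandermonde (v ∘ (Fin.succAbove i))).det| := by
          rw [vandermonde_expand P hP hPdeg v]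
      _ ≤ ∑ i : Fin (n+1), |(-1 : ℝ) ^ ((i : ℕ) + n) * P.eval (v i) *
            (Matrix.vandermonde (v ∘ (Fin.succAbove i))).det| :=
          Finset.abs_sum_le_sum_abs _ _
      _ ≤ ∑ _i : Fin (n+1), supNormOn K P * deltaN K n ^ (n * (n - 1) / 2) := by
          refine Finset.sum_le_sum fun i _ => ?_
          rw [abs_mul, abs_mul, abs_pow, abs_neg, abs_one, one_pow, one_mul]
          exact mul_le_mul (hPle _ (hv i)) (hsubd i) (abs_nonneg _)
            hB0
      _ = (n + 1 : ℝ) * deltaN K n ^ (n * (n - 1) / 2) * supNormOn K P := by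
          rw [Finset.sum_const, Finset.card_univ, Fintype.card_fin]
          ring
  -- final assembly
  set B : ℝ := (n + 1 : ℝ) * deltaN K n ^ (n * (n - 1) / 2) * supNormOn K P with hBdef
  have hBnn : 0 ≤ B := by
    apply mul_nonneg (mul_nonneg (by positivity) (pow_nonneg hδn0 _)) hB0
  have hm1ne : ((n * (n + 1) / 2 : ℕ) : ℝ) ≠ 0 := by
    have : 2 * 3 ≤ n * (n + 1) := Nat.mul_le_mul hn (by omega)
    have h2 : n * (n + 1) / 2 ≠ 0 := by omega
    exact_mod_cast h2
  set c : ℝ := B ^ (((n * (n + 1) / 2 : ℕ) : ℝ)⁻¹) with hcdef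
  have hc0 : 0 ≤ c := Real.rpow_nonneg hBnn _
  have hcm : c ^ (n * (n + 1) / 2) = B := by
    rw [hcdef, ← Real.rpow_natCast (B ^ (((n * (n + 1) / 2 : ℕ) : ℝ)⁻¹)) (n * (n + 1) / 2),
      ← Real.rpow_mul hBnn, inv_mul_cancel₀ hm1ne, Real.rpow_one]
  have hsup : deltaN K (n+1) ≤ c := by
    rw [deltaN]
    refine Real.sSup_le ?_ hc0
    rintro r ⟨x, hx, rfl⟩
    set W : ℝ := ∏ i, ∏ j ∈ Finset.Ioi i, |x j - x i| with hWdef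
    have hW0 : 0 ≤ W :=
      Finset.prod_nonneg fun a _ => Finset.prod_nonneg fun b _ => abs_nonneg _
    have hr0 : 0 ≤ (∏ p ∈ Finset.univ.offDiag, |x p.1 - x p.2|)
        ^ ((((n+1 : ℕ) : ℝ) * (((n+1 : ℕ) : ℝ) - 1))⁻¹) :=
      Real.rpow_nonneg (Finset.prod_nonneg fun p _ => abs_nonneg _) _
    have hrm : ((∏ p ∈ Finset.univ.offDiag, |x p.1 - x p.2|)
        ^ ((((n+1 : ℕ) : ℝ) * (((n+1 : ℕ) : ℝ) - 1))⁻¹)) ^ (n * (n + 1) / 2) = W := by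
      rw [prodOffDiag_eq_sq]
      exact pow_of_rpow W _ hW0 _ he1
    have hWB : W ≤ B := key x hx
    have : ((∏ p ∈ Finset.univ.offDiag, |x p.1 - x p.2|)
        ^ ((((n+1 : ℕ) : ℝ) * (((n+1 : ℕ) : ℝ) - 1))⁻¹)) ^ (n * (n + 1) / 2)
        ≤ c ^ (n * (n + 1) / 2) := by
      rw [hrm, hcm]; exact hWB
    have hne : n * (n + 1) / 2 ≠ 0 := by
      intro h; rw [h] at hm1ne; simp at hm1ne
    exact le_of_pow_le_pow_left₀ hne hc0 this
  calc deltaN K (n + 1) ^ (n * (n + 1) / 2) ≤ c ^ (n * (n + 1) / 2) :=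
      pow_le_pow_left₀ hδn10 hsup _
    _ = B := hcm
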